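/- For every fixed real E, the function λ ↦ (1/(2π)) · ∫_0^{2π} (1/2)·log(2 + (E + λ·cos x)²) dx − log(λ/2) is O(1/λ) as λ → +∞. -/

import Mathlib

open Real Asymptotics Filter MeasureTheory intervalIntegral Metric

noncomputable def Complex.abs : AbsoluteValue ℂ ℝ := NormedField.toAbsoluteValue ℂ

@[simp] lemma Complex.norm_eq_abs (z : ℂ) : ‖z‖ = Complex.abs z := rfl

@[simp] lemma Complex.abs_ofReal (x : ℝ) : Complex.abs (x : ℂ) = |x| := Complex.norm_real x

@[simp] lemma Complex.abs_I : Complex.abs Complex.I = 1 := Complex.norm_I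

@[simp] lemma Complex.abs_conj (z : ℂ) : Complex.abs ((starRingEnd ℂ) z) = Complex.abs z :=
  Complex.norm_conj z

@[simp] lemma Complex.abs_exp_ofReal_mul_I (x : ℝ) :
    Complex.abs (Complex.exp (x * Complex.I)) = 1 := Complex.norm_exp_ofReal_mul_I x

lemma Complex.continuous_abs : Continuous Complex.abs := continuous_norm

lemma Complex.sq_abs (z : ℂ) : Complex.abs z ^ 2 = Complex.normSq z := Complex.sq_norm z

lemma Complex.normSq_eq_abs (z : ℂ) : Complex.normSq z = Complex.abs z ^ 2 :=
  Complex.normSq_eq_norm_sq z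

lemma Complex.log_re' (z : ℂ) : (Complex.log z).re = Real.log (Complex.abs z) := Complex.log_re z




lemma slit_aux (a z : ℂ) (ha : ‖a‖ < 1) (hz : ‖z‖ ≤ 1) : (1 - a * z) ∈ Complex.slitPlane := by
  rw [sub_eq_add_neg]
  apply Complex.mem_slitPlane_of_norm_lt_one
  rw [norm_neg, norm_mul]
  calc ‖a‖ * ‖z‖ ≤ ‖a‖ * 1 := by gcongr
  _ < 1 := by simpa using ha

lemma mean_log_one_sub (a : ℂ) (ha : ‖a‖ < 1) :
    ∫ x in (0:ℝ)..(2 * π), Real.log (Complex.abs (1 - a * Complex.exp (x * Complex.I))) = 0 := by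
  set f : ℂ → ℂ := fun z => Complex.log (1 - a * z) with hf
  have hdiff : ∀ z : ℂ, ‖z‖ ≤ 1 → DifferentiableAt ℂ f z := by
    intro z hz
    exact (Complex.differentiableAt_log (slit_aux a z ha hz)).comp (f := fun z : ℂ => 1 - a * z) z (by fun_prop)
  have hd : DiffContOnCl ℂ f (ball (0:ℂ) 1) := by
    apply DifferentiableOn.diffContOnCl
    intro z hz
    rw [closure_ball (0:ℂ) one_ne_zero] at hz
    simp only [mem_closedBall, dist_zero_right] at hz
    exact (hdiff z hz).differentiableWithinAt
  have hcauchy := hd.circleIntegral_sub_inv_smul (w := 0) (by simp)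
  rw [circleIntegral] at hcauchy
  simp only [deriv_circleMap, circleMap_zero, sub_zero, smul_eq_mul] at hcauchy
  have h0 : f 0 = 0 := by simp [hf]
  rw [h0, mul_zero] at hcauchy
  simp only [Complex.ofReal_one, one_mul] at hcauchy
  -- integrand: (e^{ix} * I) * ((e^{ix})⁻¹ * f (e^{ix})) = I * f e^{ix}
  have hrw : ∀ x : ℝ, (Complex.exp (x * Complex.I) * Complex.I) *
      ((Complex.exp (x * Complex.I))⁻¹ * f (Complex.exp (x * Complex.I)))
      = Complex.I * f (Complex.exp (x * Complex.I)) := by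
    intro x
    have : Complex.exp (x * Complex.I) ≠ 0 := Complex.exp_ne_zero _
    field_simp
  rw [intervalIntegral.integral_congr (fun x _ => hrw x)] at hcauchy
  rw [intervalIntegral.integral_const_mul] at hcauchy
  have hI : (∫ x in (0:ℝ)..(2*π), f (Complex.exp (x * Complex.I))) = 0 :=
    (mul_eq_zero.mp hcauchy).resolve_left Complex.I_ne_zero
  have hnorm1 : ∀ x : ℝ, ‖Complex.exp (x * Complex.I)‖ ≤ 1 := fun x =>
    le_of_eq (by simp [Complex.norm_eq_abs, Complex.abs_exp_ofReal_mul_I])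
  have hcont : Continuous fun x : ℝ => f (Complex.exp (x * Complex.I)) := by
    show Continuous fun x : ℝ => Complex.log (1 - a * Complex.exp (x * Complex.I))
    rw [continuous_iff_continuousAt]
    intro x
    exact ContinuousAt.clog (by fun_prop) (slit_aux a _ ha (hnorm1 x))
  have hint : IntervalIntegrable (fun x : ℝ => f (Complex.exp (x * Complex.I)))
      MeasureTheory.volume 0 (2*π) := hcont.intervalIntegrable _ _
  have hre : ∀ x : ℝ, Real.log (Complex.abs (1 - a * Complex.exp (x * Complex.I)))
      = (f (Complex.exp (x * Complex.I))).re := fun x => (Complex.log_re _).symm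
  rw [intervalIntegral.integral_congr (fun x _ => hre x)]
  have h2pi : (0:ℝ) ≤ 2 * π := by positivity
  rw [intervalIntegral.integral_of_le h2pi] at hI ⊢
  have hre2 := integral_re (μ := MeasureTheory.volume.restrict (Set.Ioc 0 (2*π))) hint.1
  simp only [RCLike.re_to_complex] at hre2
  rw [hre2, hI]
  simp


lemma cont_log_abs (g : ℝ → ℂ) (hg : Continuous g) (h0 : ∀ x, g x ≠ 0) :
    Continuous fun x : ℝ => Real.log (Complex.abs (g x)) := by
  rw [continuous_iff_continuousAt]
  intro x
  exact ContinuousAt.comp (Real.continuousAt_log (by simpa using h0 x))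
    (Complex.continuous_abs.comp hg).continuousAt

lemma one_sub_ne (a z : ℂ) (ha : Complex.abs a < 1) (hz : Complex.abs z = 1) :
    1 - a * z ≠ 0 := by
  intro h
  rw [sub_eq_zero] at h
  have : Complex.abs (a * z) = 1 := by rw [← h]; simp
  rw [map_mul, hz, mul_one] at this
  exact ha.ne this

lemma cont_log_abs_one_sub (a : ℂ) (ha : Complex.abs a < 1) :
    Continuous fun x : ℝ => Real.log (Complex.abs (1 - a * Complex.exp (x * Complex.I))) :=
  cont_log_abs _ (by fun_prop) fun x =>
    one_sub_ne a _ ha (Complex.abs_exp_ofReal_mul_I x)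

lemma cont_log_abs_sub (z : ℂ) (hz : Complex.abs z ≠ 1) :
    Continuous fun x : ℝ => Real.log (Complex.abs (Complex.exp (x * Complex.I) - z)) := by
  apply cont_log_abs _ (by fun_prop)
  intro x h
  rw [sub_eq_zero] at h
  exact hz (by rw [← h, Complex.abs_exp_ofReal_mul_I])

lemma integral_log_abs_sub_small (z : ℂ) (h : Complex.abs z < 1) :
    ∫ x in (0:ℝ)..(2 * π), Real.log (Complex.abs (Complex.exp (x * Complex.I) - z)) = 0 := by
  have hpt : ∀ x : ℝ, Complex.abs (Complex.exp (x * Complex.I) - z)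
      = Complex.abs (1 - (starRingEnd ℂ) z * Complex.exp (x * Complex.I)) := by
    intro x
    have h1 : Complex.exp (x * Complex.I) * Complex.exp (-x * Complex.I) = 1 := by
      rw [← Complex.exp_add]; norm_num
    calc Complex.abs (Complex.exp (x * Complex.I) - z)
        = Complex.abs ((starRingEnd ℂ) (Complex.exp (x * Complex.I) - z)) := by
          rw [Complex.abs_conj]
      _ = Complex.abs (Complex.exp (-x * Complex.I) - (starRingEnd ℂ) z) := by
          rw [map_sub]
          congr 1
          rw [← Complex.exp_conj]
          congr 1
          simp [Complex.conj_ofReal]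
      _ = Complex.abs (Complex.exp (-x * Complex.I)) *
            Complex.abs (1 - (starRingEnd ℂ) z * Complex.exp (x * Complex.I)) := by
          rw [← map_mul]
          congr 1
          rw [mul_sub, mul_one]
          congr 1
          rw [mul_comm ((starRingEnd ℂ) z) _, ← mul_assoc, mul_comm (Complex.exp (-x * Complex.I)) _, h1, one_mul]
      _ = Complex.abs (1 - (starRingEnd ℂ) z * Complex.exp (x * Complex.I)) := by
          rw [show (-x : ℂ) * Complex.I = ((-x : ℝ) : ℂ) * Complex.I by push_cast; ring,
            Complex.abs_exp_ofReal_mul_I, one_mul]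
  rw [intervalIntegral.integral_congr (fun x _ => by rw [hpt x])]
  exact mean_log_one_sub _ (by simpa using h)

lemma integral_log_abs_sub_large (z : ℂ) (h : 1 < Complex.abs z) :
    ∫ x in (0:ℝ)..(2 * π), Real.log (Complex.abs (Complex.exp (x * Complex.I) - z))
      = 2 * π * Real.log (Complex.abs z) := by
  have hz0 : z ≠ 0 := by
    intro hh; rw [hh] at h; simp at h; linarith
  have hinv : Complex.abs z⁻¹ < 1 := by
    rw [map_inv₀]
    rw [inv_lt_one_iff₀]
    right; exact h
  have hpt : ∀ x : ℝ, Real.log (Complex.abs (Complex.exp (x * Complex.I) - z))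
      = Real.log (Complex.abs z)
        + Real.log (Complex.abs (1 - z⁻¹ * Complex.exp (x * Complex.I))) := by
    intro x
    have hfac : Complex.exp (x * Complex.I) - z
        = (-z) * (1 - z⁻¹ * Complex.exp (x * Complex.I)) := by
      field_simp
      ring
    rw [hfac, map_mul, Real.log_mul, map_neg_eq_map]
    · simpa using hz0
    · exact ((Complex.abs.pos (one_sub_ne z⁻¹ _ hinv (Complex.abs_exp_ofReal_mul_I x)))).ne'
  rw [intervalIntegral.integral_congr (fun x _ => hpt x)]
  rw [intervalIntegral.integral_add (intervalIntegrable_const)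
    ((cont_log_abs_one_sub _ hinv).intervalIntegrable _ _)]
  rw [mean_log_one_sub _ (by simpa using hinv)]
  simp [mul_comm]


lemma factor_pt (E lam : ℝ) (hlam : 0 < lam) (z₁ z₂ : ℂ)
    (hprod : z₁ * z₂ = 1)
    (hsum : z₁ + z₂ = -(2 * ((E : ℂ) + Real.sqrt 2 * Complex.I) / lam)) (x : ℝ) :
    ((E : ℂ) + lam * Real.cos x + Real.sqrt 2 * Complex.I)
      = (lam / 2) * Complex.exp (-x * Complex.I) *
        ((Complex.exp (x * Complex.I) - z₁) * (Complex.exp (x * Complex.I) - z₂)) := by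
  have h1 : Complex.exp (x * Complex.I) * Complex.exp (-x * Complex.I) = 1 := by
    rw [← Complex.exp_add]
    norm_num
  have hcos : ((Real.cos x : ℝ) : ℂ)
      = (Complex.exp (x * Complex.I) + Complex.exp (-x * Complex.I)) / 2 := by
    rw [Complex.ofReal_cos, Complex.cos]
  have hl : (lam : ℂ) ≠ 0 := by exact_mod_cast hlam.ne'
  have hsum' : (lam : ℂ) * (z₁ + z₂) = -(2 * ((E : ℂ) + Real.sqrt 2 * Complex.I)) := by
    rw [hsum]; field_simp
  linear_combination (lam : ℂ) * hcos
    + ((1:ℂ)/2) * Complex.exp (-x * Complex.I) * Complex.exp (x * Complex.I) * hsum'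
    + (-(lam:ℂ)/2 * Complex.exp (-x * Complex.I)) * hprod
    + (-((lam:ℂ)/2 * Complex.exp (x * Complex.I)) - ((E:ℂ) + Real.sqrt 2 * Complex.I)) * h1

lemma integral_eq (E lam : ℝ) (hlam : 0 < lam) (z₁ z₂ : ℂ)
    (hprod : z₁ * z₂ = 1)
    (hsum : z₁ + z₂ = -(2 * ((E : ℂ) + Real.sqrt 2 * Complex.I) / lam))
    (h1 : 1 < Complex.abs z₁) (h2 : Complex.abs z₂ < 1) :
    (∫ x in (0:ℝ)..(2 * π), (1 / 2) * Real.log (2 + (E + lam * Real.cos x) ^ 2))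
      = 2 * π * Real.log (lam / 2) + 2 * π * Real.log (Complex.abs z₁) := by
  have hpt : ∀ x : ℝ, (1 / 2) * Real.log (2 + (E + lam * Real.cos x) ^ 2)
      = Real.log (lam / 2)
        + (Real.log (Complex.abs (Complex.exp (x * Complex.I) - z₁))
          + Real.log (Complex.abs (Complex.exp (x * Complex.I) - z₂))) := by
    intro x
    have habs2 : (Complex.abs ((E : ℂ) + lam * Real.cos x + Real.sqrt 2 * Complex.I)) ^ 2
        = 2 + (E + lam * Real.cos x) ^ 2 := by
      have hw : ((E : ℂ) + lam * Real.cos x + Real.sqrt 2 * Complex.I)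
          = Complex.ofReal (E + lam * Real.cos x) + Complex.ofReal (Real.sqrt 2) * Complex.I := by
        push_cast; ring
      rw [hw, Complex.sq_abs, Complex.normSq_add_mul_I]
      rw [Real.sq_sqrt (by norm_num : (2:ℝ) ≥ 0)]
      ring
    have hne1 : Complex.abs (Complex.exp (x * Complex.I) - z₁) ≠ 0 := by
      rw [ne_eq, map_eq_zero, sub_eq_zero]
      intro hh
      rw [← hh, Complex.abs_exp_ofReal_mul_I] at h1
      exact lt_irrefl _ h1
    have hne2 : Complex.abs (Complex.exp (x * Complex.I) - z₂) ≠ 0 := by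
      rw [ne_eq, map_eq_zero, sub_eq_zero]
      intro hh
      rw [← hh, Complex.abs_exp_ofReal_mul_I] at h2
      exact lt_irrefl _ h2
    have hlog : Real.log (2 + (E + lam * Real.cos x) ^ 2)
        = 2 * Real.log (Complex.abs ((E : ℂ) + lam * Real.cos x + Real.sqrt 2 * Complex.I)) := by
      rw [← habs2, Real.log_pow]
      norm_num
    rw [hlog, factor_pt E lam hlam z₁ z₂ hprod hsum x]
    rw [map_mul, map_mul, map_mul]
    have hexp : Complex.abs (Complex.exp (-x * Complex.I)) = 1 := by
      rw [show (-x : ℂ) * Complex.I = ((-x : ℝ) : ℂ) * Complex.I by push_cast; ring,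
        Complex.abs_exp_ofReal_mul_I]
    have hlam2 : Complex.abs ((lam : ℂ) / 2) = lam / 2 := by
      rw [show ((lam : ℂ)/2) = Complex.ofReal (lam/2) by push_cast; ring, Complex.abs_ofReal,
        abs_of_pos (by linarith)]
    rw [hexp, hlam2, mul_one]
    rw [Real.log_mul (by positivity) (mul_ne_zero hne1 hne2), Real.log_mul hne1 hne2]
    ring
  rw [intervalIntegral.integral_congr (fun x _ => hpt x)]
  rw [intervalIntegral.integral_add (g := fun x : ℝ => Real.log (Complex.abs (Complex.exp (x * Complex.I) - z₁))
        + Real.log (Complex.abs (Complex.exp (x * Complex.I) - z₂))) intervalIntegrable_const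
    (((cont_log_abs_sub z₁ h1.ne').add (cont_log_abs_sub z₂ h2.ne)).intervalIntegrable _ _)]
  rw [intervalIntegral.integral_add ((cont_log_abs_sub z₁ h1.ne').intervalIntegrable _ _)
    ((cont_log_abs_sub z₂ h2.ne).intervalIntegrable _ _)]
  rw [integral_log_abs_sub_large z₁ h1, integral_log_abs_sub_small z₂ h2]
  simp [mul_comm]
/-- For every fixed real `E`, the Hadamard upper bound
`(1/(2π)) ∫_0^{2π} (1/2)·log(2 + (E + λ·cos x)²) dx` exceeds `log(λ/2)` by a term of
order `O(1/λ)` as `λ → +∞`. -/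
theorem hadamard_bound_excess_isBigO (E : ℝ) :
    (fun lam : ℝ =>
        ((1 / (2 * π)) *
            (∫ x in (0:ℝ)..(2 * π), (1 / 2) * Real.log (2 + (E + lam * Real.cos x) ^ 2)))
          - Real.log (lam / 2))
      =O[atTop] fun lam : ℝ => 1 / lam := by
  rw [isBigO_iff]
  refine ⟨2 * (|E| + Real.sqrt 2), ?_⟩
  filter_upwards [eventually_gt_atTop (0:ℝ)] with lam hlam
  set a : ℂ := (E : ℂ) + Real.sqrt 2 * Complex.I with ha
  have hlc : (lam : ℂ) ≠ 0 := by exact_mod_cast hlam.ne'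
  obtain ⟨s, hs⟩ := IsAlgClosed.exists_pow_nat_eq ((2 * a / lam) ^ 2 - 4) (n := 2) (by norm_num)
  set u : ℂ := (-(2 * a / lam) + s) / 2 with hu
  set v : ℂ := (-(2 * a / lam) - s) / 2 with hv
  have hprod : u * v = 1 := by
    rw [hu, hv]
    linear_combination (-(1:ℂ)/4) * hs
  have hsum : u + v = -(2 * a / lam) := by rw [hu, hv]; ring
  -- wlog: get ordered roots
  have key : ∀ z₁ z₂ : ℂ, z₁ * z₂ = 1 → z₁ + z₂ = -(2 * a / lam) →
      Complex.abs z₂ ≤ Complex.abs z₁ →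
      ‖(1 / (2 * π)) *
            (∫ x in (0:ℝ)..(2 * π), (1 / 2) * Real.log (2 + (E + lam * Real.cos x) ^ 2))
          - Real.log (lam / 2)‖ ≤ 2 * (|E| + Real.sqrt 2) * ‖1 / lam‖ := by
    intro z₁ z₂ hp hsm hle
    have hnprod : Complex.abs z₁ * Complex.abs z₂ = 1 := by
      rw [← map_mul, hp, map_one]
    have habs_ne : Complex.abs z₁ ≠ 1 := by
      intro h1
      have h2 : Complex.abs z₂ = 1 := by rw [h1, one_mul] at hnprod; exact hnprod
      have hz10 : z₁ ≠ 0 := by intro hh; rw [hh] at h1; simp at h1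
      have hconj : z₂ = (starRingEnd ℂ) z₁ := by
        have : z₁ * z₂ = z₁ * (starRingEnd ℂ) z₁ := by
          rw [hp, Complex.mul_conj, Complex.normSq_eq_abs, h1]
          norm_num
        exact mul_left_cancel₀ hz10 this
      have him : (z₁ + z₂).im = 0 := by rw [hconj]; simp
      rw [hsm] at him
      have hrw : -(2 * a / (lam : ℂ)) = Complex.ofReal (-(2 / lam)) * a := by
        push_cast; field_simp
      rw [hrw] at him
      have haim : a.im = Real.sqrt 2 := by rw [ha]; simp
      have him2 : -(2 / lam) * Real.sqrt 2 = 0 := by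
        simpa [Complex.mul_im, haim] using him
      have h2pos : (0:ℝ) < Real.sqrt 2 := Real.sqrt_pos.mpr (by norm_num)
      have hpos : (0:ℝ) < (2 / lam) * Real.sqrt 2 := mul_pos (by positivity) h2pos
      linarith
    have h0le : 0 ≤ Complex.abs z₁ := (Complex.abs.nonneg _)
    have h1' : 1 < Complex.abs z₁ := by
      rcases lt_or_ge 1 (Complex.abs z₁) with h | h
      · exact h
      · exfalso; apply habs_ne; nlinarith
    have h2' : Complex.abs z₂ < 1 := by nlinarith
    have hint := integral_eq E lam hlam z₁ z₂ hp hsm h1' h2'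
    have hexcess : (1 / (2 * π)) *
            (∫ x in (0:ℝ)..(2 * π), (1 / 2) * Real.log (2 + (E + lam * Real.cos x) ^ 2))
          - Real.log (lam / 2) = Real.log (Complex.abs z₁) := by
      rw [hint]
      have hpi : π ≠ 0 := Real.pi_ne_zero
      field_simp
      ring
    rw [hexcess]
    have hb : Complex.abs (-(2 * a / lam)) ≤ 2 * (|E| + Real.sqrt 2) / lam := by
      rw [map_neg_eq_map, map_div₀, map_mul]
      have h1 : Complex.abs a ≤ |E| + Real.sqrt 2 := by
        rw [ha]
        refine le_trans (Complex.abs.add_le _ _) ?_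
        rw [map_mul, Complex.abs_ofReal, Complex.abs_ofReal, Complex.abs_I, mul_one,
          abs_of_nonneg (Real.sqrt_nonneg 2)]
      have h2 : Complex.abs ((lam : ℂ)) = lam := by
        rw [Complex.abs_ofReal, abs_of_pos hlam]
      rw [h2]
      gcongr
      · have h22 := Complex.abs_ofReal 2
        norm_num at h22
        linarith
    have hub : Complex.abs z₁ ≤ 1 + 2 * (|E| + Real.sqrt 2) / lam := by
      have he : Complex.abs z₁ = Complex.abs ((z₁ + z₂) - z₂) := by congr 1; ring
      have htri : Complex.abs ((z₁ + z₂) - z₂) ≤ Complex.abs (z₁ + z₂) + Complex.abs z₂ := by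
        simpa [Complex.norm_eq_abs] using norm_sub_le (z₁ + z₂) z₂
      rw [he]
      calc Complex.abs ((z₁ + z₂) - z₂) ≤ Complex.abs (z₁ + z₂) + Complex.abs z₂ := htri
        _ = Complex.abs (-(2 * a / lam)) + Complex.abs z₂ := by rw [hsm]
        _ ≤ 2 * (|E| + Real.sqrt 2) / lam + 1 := by
            have := h2'.le
            gcongr
        _ = 1 + 2 * (|E| + Real.sqrt 2) / lam := by ring
    have hlog_le : Real.log (Complex.abs z₁) ≤ 2 * (|E| + Real.sqrt 2) / lam := by
      have := Real.log_le_sub_one_of_pos (by linarith : (0:ℝ) < Complex.abs z₁)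
      linarith
    have hlog_nonneg : 0 ≤ Real.log (Complex.abs z₁) := Real.log_nonneg h1'.le
    rw [Real.norm_eq_abs, abs_of_nonneg hlog_nonneg, Real.norm_eq_abs,
      abs_of_pos (by positivity : (0:ℝ) < 1/lam)]
    calc Real.log (Complex.abs z₁) ≤ 2 * (|E| + Real.sqrt 2) / lam := hlog_le
      _ = 2 * (|E| + Real.sqrt 2) * (1 / lam) := by ring
  rcases le_total (Complex.abs v) (Complex.abs u) with h | h
  · exact key u v hprod hsum h
  · exact key v u (by rw [mul_comm]; exact hprod) (by rw [add_comm]; exact hsum) h
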